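/- arXiv:2506.20613 — 2 statements merged into one kernel-verified Lean document; each statement's English description precedes it below -/
import Mathlib

section
/- There exist constants C > 0 and c > 0 such that for all integers k ≥ 1 and all integers ν with 1 ≤ ν ≤ √k, ∫_{[0,1]^{2k-1}} (∑_{a=1}^{2k-1} x_a(1-x_a))^{-ν/2} dx ≤ C (c/k)^{ν/2}. -/
open Real MeasureTheory

section aux
open Set


-- integrability of the 1-D factor
lemma oneDim_integrable {s : ℝ} (hs0 : 0 < s) (hs1 : s ≤ 1/2) :
    IntegrableOn (fun t : ℝ => (t * (1 - t)) ^ (-s)) (Icc (0:ℝ) 1) := by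
  have hsneg : (-1:ℝ) < -s := by linarith
  have h1 : IntegrableOn (fun t : ℝ => t ^ (-s)) (Icc (0:ℝ) 1) := by
    rw [integrableOn_Icc_iff_integrableOn_Ioc]
    have := intervalIntegral.intervalIntegrable_rpow' (a := 0) (b := 1) hsneg
    rwa [intervalIntegrable_iff_integrableOn_Ioc_of_le (by norm_num)] at this
  have h2 : IntegrableOn (fun t : ℝ => (1 - t) ^ (-s)) (Icc (0:ℝ) 1) := by
    have := intervalIntegral.intervalIntegrable_rpow' (a := 0) (b := 1) hsneg
    have h3 := this.comp_sub_left 1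
    simp only [sub_zero, sub_self] at h3
    rw [integrableOn_Icc_iff_integrableOn_Ioc]
    have h4 := h3.symm
    rwa [intervalIntegrable_iff_integrableOn_Ioc_of_le (by norm_num)] at h4
  have hF : IntegrableOn (fun t : ℝ => (2:ℝ)^s * t ^ (-s) + (2:ℝ)^s * (1 - t) ^ (-s)) (Icc (0:ℝ) 1) :=
    (h1.const_mul _).add (h2.const_mul _)
  apply hF.mono' ?_ ?_
  · apply Measurable.aestronglyMeasurable
    fun_prop
  · filter_upwards [ae_restrict_mem measurableSet_Icc] with t ht
    obtain ⟨ht0, ht1⟩ := ht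
    rcases eq_or_lt_of_le ht0 with h | h
    · simp [← h, Real.zero_rpow (neg_ne_zero.mpr hs0.ne')]
      positivity
    rcases eq_or_lt_of_le ht1 with h' | h'
    · rw [h']
      simp [Real.zero_rpow (neg_ne_zero.mpr hs0.ne')]
      positivity
    have hy : 0 < t * (1 - t) := by nlinarith
    rw [Real.norm_of_nonneg (Real.rpow_nonneg hy.le _)]
    rcases le_total t (1/2) with hhalf | hhalf
    · have : t / 2 ≤ t * (1 - t) := by nlinarith
      calc (t * (1-t)) ^ (-s) ≤ (t/2) ^ (-s) :=
            Real.rpow_le_rpow_of_nonpos (by linarith) this (by linarith)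
        _ = (2:ℝ)^s * t ^ (-s) := by
            rw [Real.div_rpow ht0 (by norm_num), Real.rpow_neg (by norm_num : (0:ℝ) ≤ 2),
              div_eq_mul_inv, inv_inv, mul_comm]
        _ ≤ _ := by
            have : 0 ≤ (2:ℝ)^s * (1 - t) ^ (-s) := mul_nonneg (by positivity) (Real.rpow_nonneg (by linarith) _)
            linarith
    · have : (1-t) / 2 ≤ t * (1 - t) := by nlinarith
      calc (t * (1-t)) ^ (-s) ≤ ((1-t)/2) ^ (-s) :=
            Real.rpow_le_rpow_of_nonpos (by linarith) this (by linarith)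
        _ = (2:ℝ)^s * (1-t) ^ (-s) := by
            rw [Real.div_rpow (by linarith) (by norm_num), Real.rpow_neg (by norm_num : (0:ℝ) ≤ 2),
              div_eq_mul_inv, inv_inv, mul_comm]
        _ ≤ _ := by
            have : 0 ≤ (2:ℝ)^s * t ^ (-s) := by positivity
            linarith

lemma bd1 {s : ℝ} (hs0 : 0 < s) (hs1 : s ≤ 1/2) {t : ℝ} (ht : t ∈ Icc (0:ℝ) (1/2)) :
    (t * (1 - t)) ^ (-s) ≤ (2:ℝ)^s * t ^ (-s) := by
  obtain ⟨ht0, ht1⟩ := ht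
  rcases eq_or_lt_of_le ht0 with h | h
  · rw [← h]
    simp [Real.zero_rpow (neg_ne_zero.mpr hs0.ne')]
  · have : t / 2 ≤ t * (1 - t) := by nlinarith
    calc (t * (1-t)) ^ (-s) ≤ (t/2) ^ (-s) :=
          Real.rpow_le_rpow_of_nonpos (by linarith) this (by linarith)
      _ = (2:ℝ)^s * t ^ (-s) := by
          rw [Real.div_rpow ht0 (by norm_num), Real.rpow_neg (by norm_num : (0:ℝ) ≤ 2),
            div_eq_mul_inv, inv_inv, mul_comm]

lemma bd2 {s : ℝ} (hs0 : 0 < s) (hs1 : s ≤ 1/2) {t : ℝ} (ht : t ∈ Icc (1/2:ℝ) 1) :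
    (t * (1 - t)) ^ (-s) ≤ (2:ℝ)^s * (1 - t) ^ (-s) := by
  obtain ⟨ht0, ht1⟩ := ht
  rcases eq_or_lt_of_le ht1 with h | h
  · rw [h]
    simp [Real.zero_rpow (neg_ne_zero.mpr hs0.ne')]
  · have : (1-t) / 2 ≤ t * (1 - t) := by nlinarith
    calc (t * (1-t)) ^ (-s) ≤ ((1-t)/2) ^ (-s) :=
          Real.rpow_le_rpow_of_nonpos (by linarith) this (by linarith)
      _ = (2:ℝ)^s * (1-t) ^ (-s) := by
          rw [Real.div_rpow (by linarith) (by norm_num), Real.rpow_neg (by norm_num : (0:ℝ) ≤ 2),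
            div_eq_mul_inv, inv_inv, mul_comm]

lemma oneDim_bound {s : ℝ} (hs0 : 0 < s) (hs1 : s ≤ 1/2)
    (hint : IntegrableOn (fun t : ℝ => (t * (1 - t)) ^ (-s)) (Icc (0:ℝ) 1)) :
    ∫ t in Icc (0:ℝ) 1, (t * (1 - t)) ^ (-s) ≤ (4:ℝ)^s / (1-s) := by
  have hsneg : (-1:ℝ) < -s := by linarith
  have hIoc : IntegrableOn (fun t : ℝ => (t * (1 - t)) ^ (-s)) (Ioc (0:ℝ) 1) :=
    hint.mono_set Ioc_subset_Icc_self
  have hII : IntervalIntegrable (fun t : ℝ => (t * (1 - t)) ^ (-s)) volume 0 1 := by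
    rwa [intervalIntegrable_iff_integrableOn_Ioc_of_le (by norm_num)]
  have hII1 : IntervalIntegrable (fun t : ℝ => (t * (1 - t)) ^ (-s)) volume 0 (1/2) :=
    hII.mono_set (by rw [uIcc_of_le (by norm_num), uIcc_of_le (by norm_num)]; exact Icc_subset_Icc le_rfl (by norm_num))
  have hII2 : IntervalIntegrable (fun t : ℝ => (t * (1 - t)) ^ (-s)) volume (1/2) 1 :=
    hII.mono_set (by rw [uIcc_of_le (by norm_num), uIcc_of_le (by norm_num)]; exact Icc_subset_Icc (by norm_num) le_rfl)
  have hrpow1 : IntervalIntegrable (fun t : ℝ => t ^ (-s)) volume 0 (1/2) :=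
    intervalIntegral.intervalIntegrable_rpow' hsneg
  have hrpow2 : IntervalIntegrable (fun t : ℝ => (1 - t) ^ (-s)) volume (1/2) 1 := by
    have := (intervalIntegral.intervalIntegrable_rpow' (a := 0) (b := 1/2) hsneg).comp_sub_left 1
    norm_num at this
    exact this.symm
  have key : ∫ t in (0:ℝ)..1, (t * (1 - t)) ^ (-s)
      = (∫ t in (0:ℝ)..(1/2), (t * (1 - t)) ^ (-s)) + ∫ t in (1/2:ℝ)..1, (t * (1 - t)) ^ (-s) :=
    (intervalIntegral.integral_add_adjacent_intervals hII1 hII2).symm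
  have e1 : ∫ t in (0:ℝ)..(1/2), (t:ℝ) ^ (-s) = ((1/2:ℝ) ^ (1 - s)) / (1 - s) := by
    rw [integral_rpow (Or.inl hsneg)]
    rw [Real.zero_rpow (by linarith : -s + 1 ≠ 0)]
    norm_num
    ring_nf
  have p1 : ∫ t in (0:ℝ)..(1/2), (t * (1 - t)) ^ (-s) ≤ (2:ℝ)^s * (((1/2:ℝ) ^ (1 - s)) / (1 - s)) := by
    calc ∫ t in (0:ℝ)..(1/2), (t * (1 - t)) ^ (-s) ≤ ∫ t in (0:ℝ)..(1/2), (2:ℝ)^s * t ^ (-s) := by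
          apply intervalIntegral.integral_mono_on (by norm_num) hII1 (hrpow1.const_mul _)
          intro t ht
          exact bd1 hs0 hs1 ht
      _ = (2:ℝ)^s * (((1/2:ℝ) ^ (1 - s)) / (1 - s)) := by
          rw [intervalIntegral.integral_const_mul, e1]
  have p2 : ∫ t in (1/2:ℝ)..1, (t * (1 - t)) ^ (-s) ≤ (2:ℝ)^s * (((1/2:ℝ) ^ (1 - s)) / (1 - s)) := by
    calc ∫ t in (1/2:ℝ)..1, (t * (1 - t)) ^ (-s) ≤ ∫ t in (1/2:ℝ)..1, (2:ℝ)^s * (1 - t) ^ (-s) := by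
          apply intervalIntegral.integral_mono_on (by norm_num) hII2 (hrpow2.const_mul _)
          intro t ht
          exact bd2 hs0 hs1 ht
      _ = (2:ℝ)^s * ∫ t in (1/2:ℝ)..1, (1 - t) ^ (-s) := intervalIntegral.integral_const_mul _ _
      _ = (2:ℝ)^s * (((1/2:ℝ) ^ (1 - s)) / (1 - s)) := by
          rw [show (∫ t in (1/2:ℝ)..1, (1 - t) ^ (-s)) = ∫ t in (0:ℝ)..(1/2), (t:ℝ) ^ (-s) by
            have := intervalIntegral.integral_comp_sub_left (a := (1/2:ℝ)) (b := 1)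
              (fun t : ℝ => t ^ (-s)) 1
            norm_num at this ⊢
            convert this using 2, e1]
  have harith : (2:ℝ)^s * (((1/2:ℝ) ^ (1 - s)) / (1 - s)) + (2:ℝ)^s * (((1/2:ℝ) ^ (1 - s)) / (1 - s))
      = (4:ℝ)^s / (1-s) := by
    have h2 : ((1/2:ℝ) ^ (1 - s)) = 2⁻¹ * (2:ℝ)^s := by
      rw [show (1/2:ℝ) = 2⁻¹ by norm_num, ← Real.rpow_neg_one (2:ℝ),
        ← Real.rpow_mul (by norm_num), ← Real.rpow_add (by norm_num : (0:ℝ) < 2)]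
      congr 1
      ring
    rw [h2]
    have h4 : (4:ℝ)^s = (2:ℝ)^s * (2:ℝ)^s := by
      rw [show (4:ℝ) = 2 * 2 by norm_num, Real.mul_rpow (by norm_num) (by norm_num)]
    rw [h4]
    ring
  rw [MeasureTheory.integral_Icc_eq_integral_Ioc,
    ← intervalIntegral.integral_of_le (by norm_num : (0:ℝ) ≤ 1), key]
  linarith

end aux

section main
open Set


theorem negative_moment_sigma_bound :
    ∃ C > (0 : ℝ), ∃ c > (0 : ℝ), ∀ k : ℕ, 1 ≤ k → ∀ ν : ℕ, 1 ≤ ν → (ν : ℝ) ≤ Real.sqrt k →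
      ∫ x in Set.univ.pi (fun _ : Fin (2 * k - 1) => Set.Icc (0 : ℝ) 1),
          (∑ a, x a * (1 - x a)) ^ (-(ν : ℝ) / 2)
        ≤ C * (c / k) ^ ((ν : ℝ) / 2) := by
  refine ⟨1, one_pos, 4 * Real.exp 2, by positivity, ?_⟩
  intro k hk ν hν hνk
  set n := 2 * k - 1 with hn_def
  have hkn : k ≤ n := by omega
  have hn1 : 1 ≤ n := by omega
  have hn0 : (0:ℝ) < n := by exact_mod_cast hn1
  set p : ℝ := (ν : ℝ) / 2 with hp_def
  have hp0 : 0 < p := by positivity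
  have hνn : (ν:ℝ) ≤ (n:ℝ) := by
    calc (ν:ℝ) ≤ Real.sqrt k := hνk
      _ ≤ (k:ℝ) := by
          have hk1 : (1:ℝ) ≤ k := by exact_mod_cast hk
          have := Real.sqrt_le_sqrt (by nlinarith : (k:ℝ) ≤ (k:ℝ)^2)
          rwa [Real.sqrt_sq (by linarith)] at this
      _ ≤ (n:ℝ) := by exact_mod_cast hkn
  set s : ℝ := p / n with hs_def
  have hs0 : 0 < s := div_pos hp0 hn0
  have hs1 : s ≤ 1/2 := by
    rw [hs_def, hp_def, div_le_iff₀ hn0]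
    linarith
  have hsn : s * n = p := by rw [hs_def]; exact div_mul_cancel₀ p hn0.ne'
  have h1s : (0:ℝ) < 1 - s := by linarith
  -- 1-D facts
  have hint := oneDim_integrable hs0 hs1
  set I : ℝ := ∫ t in Icc (0:ℝ) 1, (t * (1 - t)) ^ (-s) with hI_def
  have hI0 : 0 ≤ I := by
    apply setIntegral_nonneg measurableSet_Icc
    intro t ht
    exact Real.rpow_nonneg (mul_nonneg ht.1 (by linarith [ht.2])) _
  have hIle : I ≤ (4:ℝ)^s / (1-s) := oneDim_bound hs0 hs1 hint
  -- the cube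
  set S := Set.univ.pi (fun _ : Fin n => Set.Icc (0 : ℝ) 1) with hS_def
  have hS : MeasurableSet S := MeasurableSet.univ_pi (fun _ => measurableSet_Icc)
  -- dominating function
  set h : ℝ → ℝ := fun t => (t * (1 - t)) ^ (-s) with hh_def
  set G : (Fin n → ℝ) → ℝ := fun x => ∏ a, (Icc (0:ℝ) 1).indicator h (x a) with hG_def
  have hind : Integrable ((Icc (0:ℝ) 1).indicator h) :=
    (integrable_indicator_iff measurableSet_Icc).2 hint
  have hG_int : Integrable G := Integrable.fintype_prod (f := fun _ : Fin n => (Icc (0:ℝ) 1).indicator h) (fun _ => hind)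
  have hG_val : ∫ x, G x = I ^ n := by
    rw [hG_def]
    beta_reduce; rw [volume_pi, MeasureTheory.integral_fintype_prod_eq_pow ((Icc (0:ℝ) 1).indicator h)]
    rw [integral_indicator measurableSet_Icc, Fintype.card_fin]
  have hprodG : ∀ x ∈ S, (∏ a, h (x a)) = G x := by
    intro x hx
    exact Finset.prod_congr rfl fun a _ => (Set.indicator_of_mem (hx a trivial) h).symm
  have hg_int : IntegrableOn (fun x : Fin n → ℝ => ∏ a, h (x a)) S :=
    (hG_int.integrableOn).congr_fun (fun x hx => (hprodG x hx).symm) hS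
  have hSint : ∫ x in S, (∏ a, h (x a)) = I ^ n := by
    rw [← hG_val, ← integral_indicator hS]
    congr 1
    funext x
    by_cases hx : x ∈ S
    · rw [Set.indicator_of_mem hx]
      exact hprodG x hx
    · rw [Set.indicator_of_notMem hx]
      rw [Set.mem_univ_pi] at hx
      push_neg at hx
      obtain ⟨a, ha⟩ := hx
      exact (Finset.prod_eq_zero (Finset.mem_univ a) (Set.indicator_of_notMem ha h)).symm
  -- a.e. interior
  have hae : ∀ᵐ x : Fin n → ℝ, ∀ a, x a ≠ 0 ∧ x a ≠ 1 := by
    rw [MeasureTheory.ae_all_iff]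
    intro a
    have h0 : ∀ᵐ x : Fin n → ℝ, x a ≠ 0 := by
      rw [volume_pi]; exact Measure.ae_eval_ne _ a 0
    have h1 : ∀ᵐ x : Fin n → ℝ, x a ≠ 1 := by
      rw [volume_pi]; exact Measure.ae_eval_ne _ a 1
    filter_upwards [h0, h1] with x hx0 hx1
    exact ⟨hx0, hx1⟩
  -- main bound
  have key : ∫ x in S, (∑ a, x a * (1 - x a)) ^ (-p)
      ≤ ∫ x in S, (n:ℝ) ^ (-p) * ∏ a, h (x a) := by
    apply integral_mono_of_nonneg
    · filter_upwards [ae_restrict_mem hS] with x hx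
      apply Real.rpow_nonneg
      apply Finset.sum_nonneg
      intro a _
      have := hx a trivial
      exact mul_nonneg this.1 (by linarith [this.2])
    · exact hg_int.const_mul _
    · filter_upwards [ae_restrict_mem hS, ae_restrict_of_ae hae] with x hx hx'
      have hy : ∀ a, 0 < x a * (1 - x a) := by
        intro a
        have h1 := hx a trivial
        have h2 := hx' a
        rcases h1 with ⟨ha0, ha1⟩
        have : 0 < x a := lt_of_le_of_ne ha0 (Ne.symm h2.1)
        have : x a < 1 := lt_of_le_of_ne ha1 h2.2
        nlinarith [lt_of_le_of_ne ha0 (Ne.symm h2.1)]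
      have hAM : ∏ a, (x a * (1 - x a)) ^ ((n:ℝ)⁻¹) ≤ (n:ℝ)⁻¹ * ∑ a, x a * (1 - x a) := by
        have := Real.geom_mean_le_arith_mean_weighted Finset.univ (fun _ => (n:ℝ)⁻¹)
          (fun a => x a * (1 - x a)) (fun _ _ => by positivity)
          (by
            rw [Finset.sum_const, Finset.card_univ, Fintype.card_fin, nsmul_eq_mul]
            field_simp)
          (fun a _ => (hy a).le)
        simpa [Finset.mul_sum] using this
      set P : ℝ := ∏ a, (x a * (1 - x a)) ^ ((n:ℝ)⁻¹) with hP_def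
      have hP0 : 0 < P := Finset.prod_pos fun a _ => Real.rpow_pos_of_pos (hy a) _
      have hnP : (n:ℝ) * P ≤ ∑ a, x a * (1 - x a) := by
        have h2 := mul_le_mul_of_nonneg_left hAM hn0.le
        rwa [← mul_assoc, mul_inv_cancel₀ hn0.ne', one_mul] at h2
      calc (∑ a, x a * (1 - x a)) ^ (-p) ≤ ((n:ℝ) * P) ^ (-p) :=
            Real.rpow_le_rpow_of_nonpos (by positivity) hnP (by linarith)
        _ = (n:ℝ) ^ (-p) * P ^ (-p) := Real.mul_rpow hn0.le hP0.le
        _ = (n:ℝ) ^ (-p) * ∏ a, h (x a) := by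
            congr 1
            rw [hP_def, ← Real.finset_prod_rpow _ _ (fun a _ => Real.rpow_nonneg (hy a).le _)]
            apply Finset.prod_congr rfl
            intro a _
            rw [← Real.rpow_mul (hy a).le]
            congr 1
            field_simp [hs_def]; rw [← hsn]; ring
  -- value computation
  have hval : ∫ x in S, (n:ℝ) ^ (-p) * ∏ a, h (x a) = (n:ℝ) ^ (-p) * I ^ n := by
    rw [integral_const_mul, hSint]
  -- final arithmetic
  have harith : (n:ℝ) ^ (-p) * I ^ n ≤ 1 * ((4 * Real.exp 2) / k) ^ p := by
    have hb : I ^ n ≤ ((4:ℝ)^s * Real.exp (2*s)) ^ n := by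
      apply pow_le_pow_left₀ hI0
      calc I ≤ (4:ℝ)^s / (1-s) := hIle
        _ ≤ (4:ℝ)^s * (1 + 2*s) := by
            rw [div_le_iff₀ h1s]
            have h4s : (0:ℝ) < (4:ℝ)^s := by positivity
            have hkey : (0:ℝ) ≤ 4^s * (s*(1-2*s)) :=
              mul_nonneg h4s.le (mul_nonneg hs0.le (by linarith))
            nlinarith [hkey]
        _ ≤ (4:ℝ)^s * Real.exp (2*s) := by
            have := Real.add_one_le_exp (2*s)
            have h4s : (0:ℝ) ≤ (4:ℝ)^s := by positivity
            nlinarith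
    have hc : ((4:ℝ)^s * Real.exp (2*s)) ^ n = (4 * Real.exp 2) ^ p := by
      rw [Real.exp_mul, ← Real.mul_rpow (by norm_num) (Real.exp_pos 2).le,
        ← Real.rpow_natCast ((4 * Real.exp 2) ^ s) n, ← Real.rpow_mul (by positivity), hsn]
    have hd : (n:ℝ) ^ (-p) * (4 * Real.exp 2) ^ p = ((4 * Real.exp 2) / n) ^ p := by
      rw [Real.div_rpow (by positivity) hn0.le, Real.rpow_neg hn0.le, div_eq_mul_inv, mul_comm]
    have he : ((4 * Real.exp 2) / (n:ℝ)) ^ p ≤ ((4 * Real.exp 2) / (k:ℝ)) ^ p := by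
      apply Real.rpow_le_rpow (by positivity) ?_ hp0.le
      apply div_le_div_of_nonneg_left (by positivity) (by exact_mod_cast hk) ?_
      exact_mod_cast hkn
    calc (n:ℝ) ^ (-p) * I ^ n ≤ (n:ℝ) ^ (-p) * ((4:ℝ)^s * Real.exp (2*s)) ^ n := by
          apply mul_le_mul_of_nonneg_left hb (Real.rpow_nonneg hn0.le _)
      _ = ((4 * Real.exp 2) / n) ^ p := by rw [hc, hd]
      _ ≤ 1 * ((4 * Real.exp 2) / k) ^ p := by rw [one_mul]; exact he
  have hexp : -(ν : ℝ) / 2 = -p := by rw [hp_def]; ring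
  rw [hexp]
  exact le_trans (le_trans key (le_of_eq hval)) harith

end main
end

section
/- Fix an integer k ≥ 1 and m = 2k-1 voters. For x ∈ [0,1]^m, let N(x) be the number of indices a ∈ [m] with x_a < X_a, where X_1,…,X_m are independent uniform [0,1] random variables. Then the probability Q_{m,n} that there exists a Condorcet winner among n candidates under the impartial culture model equals n ∫_{[0,1]^m} P(N(x) ≥ k)^{n-1} dx. -/
open Real MeasureTheory Set Function
open scoped ENNReal

noncomputable def myu : Measure ℝ := volume.restrict (Set.Icc (0:ℝ) 1)
instance : IsProbabilityMeasure myu := ⟨by simp [myu, Real.volume_Icc]⟩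
instance : NullSingletonClass myu := by unfold myu; infer_instance

lemma cube_eq (ι : Type*) [Fintype ι] :
    volume.restrict (Set.univ.pi fun _ : ι => Set.Icc (0:ℝ) 1)
      = Measure.pi fun _ : ι => myu := by
  refine (Measure.pi_eq fun s hs => ?_).symm
  rw [Measure.restrict_apply (MeasurableSet.univ_pi hs), ← Set.pi_inter_distrib,
    volume_pi_pi]
  exact Finset.prod_congr rfl fun i _ => (Measure.restrict_apply (hs i)).symm

lemma pi_eval_preimage {ι : Type*} [Fintype ι] {α : ι → Type*} [∀ i, MeasurableSpace (α i)]
    (μ : ∀ i, Measure (α i)) [∀ i, IsProbabilityMeasure (μ i)] (i : ι) {A : Set (α i)}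
    (_hA : MeasurableSet A) : Measure.pi μ (Function.eval i ⁻¹' A) = μ i A := by
  classical
  rw [Set.eval_preimage, Measure.pi_pi]
  rw [Finset.prod_eq_single i (fun b _ hb => by simp [Function.update_of_ne hb])
    (by simp)]
  simp

lemma transpose_measurePreserving {ι κ : Type*} [Fintype ι] [Fintype κ]
    {α : Type*} [MeasurableSpace α] (μ : Measure α) [IsProbabilityMeasure μ] :
    MeasurePreserving (fun (U : ι → κ → α) (a : κ) (j : ι) => U j a)
      (Measure.pi fun _ : ι => Measure.pi fun _ : κ => μ)
      (Measure.pi fun _ : κ => Measure.pi fun _ : ι => μ) := by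
  classical
  have hT : Measurable (fun (U : ι → κ → α) (a : κ) (j : ι) => U j a) :=
    measurable_pi_lambda _ fun a => measurable_pi_lambda _ fun j =>
      (measurable_pi_apply a).comp (measurable_pi_apply j)
  refine ⟨hT, ?_⟩
  refine (Measure.pi_eq_generateFrom
    (C := fun _ : κ => Set.pi Set.univ '' Set.pi Set.univ fun _ : ι => {s : Set α | MeasurableSet s})
    (fun _ => generateFrom_pi) (fun _ => isPiSystem_pi) (fun _ => ?_) ?_).symm
  · exact ⟨fun _ => Set.univ,
      fun _ => ⟨fun _ => Set.univ, fun i _ => MeasurableSet.univ, by simp⟩,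
      fun _ => measure_lt_top _ _, by rw [Set.iUnion_const]⟩
  · intro s hs
    have h : ∀ a, ∃ t : ι → Set α, (∀ j, MeasurableSet (t j)) ∧ s a = Set.univ.pi t := by
      intro a
      obtain ⟨t, ht, hts⟩ := hs a
      exact ⟨t, fun j => ht j (Set.mem_univ j), hts.symm⟩
    choose t ht hst using h
    have hsm : ∀ a, MeasurableSet (s a) := by
      intro a; rw [hst a]; exact MeasurableSet.univ_pi (ht a)
    rw [Measure.map_apply hT (MeasurableSet.univ_pi hsm)]
    have hpre : (fun (U : ι → κ → α) (a : κ) (j : ι) => U j a) ⁻¹' (Set.univ.pi s)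
        = Set.univ.pi fun j => Set.univ.pi fun a => t a j := by
      ext U
      simp only [Set.mem_preimage, Set.mem_pi, Set.mem_univ, hst, true_implies]
      exact forall_comm
    rw [hpre, Measure.pi_pi]
    have h2 : ∀ a, (Measure.pi fun _ : ι => μ) (s a) = ∏ j, μ (t a j) := fun a => by
      rw [hst a, Measure.pi_pi]
    simp_rw [Measure.pi_pi, h2]
    exact Finset.prod_comm

lemma perm_eq_of_iff {q : ℕ} {r s : Equiv.Perm (Fin q)}
    (h : ∀ j j', r j < r j' ↔ s j < s j') : r = s := by
  have hsm : StrictMono fun x => s (r.symm x) := fun x y hxy =>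
    (h (r.symm x) (r.symm y)).mp (by simpa using hxy)
  have hrange : Set.range (fun x => s (r.symm x)) = Set.range (id : Fin q → Fin q) := by
    rw [Set.range_id]
    exact Set.range_eq_univ.mpr (r.symm.trans s).surjective
  have hid : (fun x => s (r.symm x)) = id := (hsm.range_inj (strictMono_id : StrictMono (id : Fin q → Fin q))).mp hrange
  refine Equiv.ext fun x => ?_
  have h2 := congrFun hid (r x)
  simp only [Equiv.symm_apply_apply, id_eq] at h2
  exact h2.symm

lemma exists_rank {q : ℕ} {v : Fin q → ℝ} (hv : Function.Injective v) :
    ∃ τ : Equiv.Perm (Fin q), ∀ j j', τ j < τ j' ↔ v j < v j' := by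
  have hsm : StrictMono (v ∘ Tuple.sort v) :=
    (Tuple.monotone_sort v).strictMono_of_injective (hv.comp (Equiv.injective _))
  refine ⟨(Tuple.sort v)⁻¹, fun j j' => ?_⟩
  rw [← hsm.lt_iff_lt]
  simp [Equiv.Perm.coe_inv]

lemma measurableSet_iff_right {δ : Type*} [MeasurableSpace δ] {s : Set δ}
    (hs : MeasurableSet s) (q : Prop) : MeasurableSet {x | x ∈ s ↔ q} := by
  by_cases h : q
  · simp only [h, iff_true]; exact hs
  · simp only [h, iff_false]; exact hs.compl

lemma measurableSet_iff_left {δ : Type*} [MeasurableSpace δ] {s : Set δ}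
    (hs : MeasurableSet s) (q : Prop) : MeasurableSet {x | q ↔ x ∈ s} := by
  have h : {x | q ↔ x ∈ s} = {x | x ∈ s ↔ q} := by ext x; exact iff_comm
  rw [h]; exact measurableSet_iff_right hs q

lemma measurableSet_le_card {δ : Type*} [MeasurableSpace δ] {m : Type*} [Fintype m]
    (p : m → δ → Prop) (hp : ∀ a, MeasurableSet {x | p a x}) (k : ℕ) :
    MeasurableSet {x | k ≤ Nat.card {a // p a x}} := by
  classical
  have hset : {x | k ≤ Nat.card {a // p a x}}
      = ⋃ (s : Finset m) (_ : k ≤ s.card), ⋂ a, {x | p a x ↔ a ∈ s} := by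
    ext x
    simp only [Set.mem_setOf_eq, Set.mem_iUnion, Set.mem_iInter]
    have hcard : Nat.card {a // p a x} = (Finset.univ.filter fun a => p a x).card := by
      rw [Nat.card_eq_fintype_card, Fintype.card_subtype]
    constructor
    · intro h
      refine ⟨Finset.univ.filter fun a => p a x, ?_, fun a => by simp⟩
      rwa [← hcard]
    · rintro ⟨s, hs, hmem⟩
      have he : Finset.univ.filter (fun a => p a x) = s := by
        ext a; simpa using (hmem a)
      rw [hcard, he]; exact hs
  rw [hset]
  exact MeasurableSet.iUnion fun s => MeasurableSet.iUnion fun _ =>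
    MeasurableSet.iInter fun a => measurableSet_iff_right (hp a) _
lemma diag_null {q : ℕ} {i j : Fin q} (hij : i ≠ j) :
    Measure.pi (fun _ : Fin q => myu) {v | v i = v j} = 0 := by
  cases q with
  | zero => exact i.elim0
  | succ q' =>
    obtain ⟨t0, ht0⟩ := Fin.exists_succAbove_eq (Ne.symm hij)
    have mp := measurePreserving_piFinSuccAbove (fun _ : Fin (q' + 1) => myu) i
    have hSm : MeasurableSet {p : ℝ × (Fin q' → ℝ) | p.1 = p.2 t0} :=
      measurableSet_eq_fun measurable_fst ((measurable_pi_apply t0).comp measurable_snd)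
    have hpre : {v : Fin (q' + 1) → ℝ | v i = v j}
        = (MeasurableEquiv.piFinSuccAbove (fun _ : Fin (q' + 1) => ℝ) i) ⁻¹'
            {p : ℝ × (Fin q' → ℝ) | p.1 = p.2 t0} := by
      ext v
      simp [MeasurableEquiv.piFinSuccAbove_apply, Fin.removeNth, ht0]
    have hz : ∀ x : ℝ, (Measure.pi fun _ : Fin q' => myu)
        (Prod.mk x ⁻¹' {p : ℝ × (Fin q' → ℝ) | p.1 = p.2 t0}) = 0 := by
      intro x
      have he : Prod.mk x ⁻¹' {p : ℝ × (Fin q' → ℝ) | p.1 = p.2 t0}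
          = Function.eval t0 ⁻¹' ({x} : Set ℝ) := by
        ext V; simp [eq_comm]
      rw [he, pi_eval_preimage _ t0 (measurableSet_singleton x), measure_singleton]
    rw [hpre, mp.measure_preimage hSm.nullMeasurableSet, Measure.prod_apply hSm]
    exact (lintegral_congr hz).trans lintegral_zero

def Fset {q : ℕ} (τ : Equiv.Perm (Fin q)) : Set (Fin q → ℝ) :=
  {v | ∀ j j', τ j < τ j' ↔ v j < v j'}

lemma measurableSet_Fset {q : ℕ} (τ : Equiv.Perm (Fin q)) : MeasurableSet (Fset τ) := by
  have h : Fset τ = ⋂ (j) (j'), {v : Fin q → ℝ | τ j < τ j' ↔ v j < v j'} := by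
    ext v; simp [Fset]
  rw [h]
  exact MeasurableSet.iInter fun j => MeasurableSet.iInter fun j' =>
    measurableSet_iff_left (measurableSet_lt (measurable_pi_apply j) (measurable_pi_apply j')) _

lemma Fset_measure_eq_one {q : ℕ} (τ : Equiv.Perm (Fin q)) :
    Measure.pi (fun _ : Fin q => myu) (Fset τ) = Measure.pi (fun _ : Fin q => myu) (Fset 1) := by
  have mp := measurePreserving_piCongrLeft (fun _ : Fin q => myu) (τ : Fin q ≃ Fin q)
  set e := MeasurableEquiv.piCongrLeft (fun _ : Fin q => ℝ) (τ : Fin q ≃ Fin q) with he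
  have happ : ∀ (v : Fin q → ℝ) (j : Fin q), e v (τ j) = v j := fun v j => by
    rw [he, MeasurableEquiv.coe_piCongrLeft]
    exact Equiv.piCongrLeft_apply_apply (fun _ : Fin q => ℝ) (τ : Fin q ≃ Fin q) v j
  have hpre : e ⁻¹' (Fset 1) = Fset τ := by
    ext v
    simp only [Set.mem_preimage, Fset, Set.mem_setOf_eq, Equiv.Perm.coe_one, id_eq]
    constructor
    · intro h j j'
      have h2 := h (τ j) (τ j')
      rwa [happ, happ] at h2
    · intro h a b
      obtain ⟨j, rfl⟩ := τ.surjective a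
      obtain ⟨j', rfl⟩ := τ.surjective b
      rw [happ, happ]
      exact h j j'
  rw [← hpre, mp.measure_preimage (measurableSet_Fset 1).nullMeasurableSet]

lemma Fset_disjoint {q : ℕ} : Pairwise (Disjoint on (Fset (q := q))) := by
  intro τ τ' hne
  refine Set.disjoint_left.mpr fun {v} hv hv' => hne ?_
  exact perm_eq_of_iff fun j j' => (hv j j').trans (hv' j j').symm

lemma compl_iUnion_Fset_null {q : ℕ} :
    Measure.pi (fun _ : Fin q => myu) ((⋃ τ : Equiv.Perm (Fin q), Fset τ)ᶜ) = 0 := by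
  have hsub : (⋃ τ : Equiv.Perm (Fin q), Fset τ)ᶜ
      ⊆ ⋃ (i) (j) (_ : i ≠ j), {v : Fin q → ℝ | v i = v j} := by
    intro v hv
    by_contra hmem
    simp only [Set.mem_iUnion, not_exists, Set.mem_setOf_eq] at hmem
    have hinj : Function.Injective v := fun a b hab => by
      by_contra hne
      exact hmem a b hne hab
    exact hv (Set.mem_iUnion.mpr (exists_rank hinj))
  exact measure_mono_null hsub (measure_iUnion_null fun i => measure_iUnion_null fun j =>
    measure_iUnion_null fun hij => diag_null hij)

lemma Fset_measure {q : ℕ} (τ : Equiv.Perm (Fin q)) :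
    Measure.pi (fun _ : Fin q => myu) (Fset τ) = ((q.factorial : ℝ≥0∞))⁻¹ := by
  classical
  have h1 : Measure.pi (fun _ : Fin q => myu) (⋃ τ : Equiv.Perm (Fin q), Fset τ) = 1 :=
    (prob_compl_eq_zero_iff (MeasurableSet.iUnion fun τ => measurableSet_Fset τ)).mp
      compl_iUnion_Fset_null
  have h2 : Measure.pi (fun _ : Fin q => myu) (⋃ τ : Equiv.Perm (Fin q), Fset τ)
      = ∑' τ : Equiv.Perm (Fin q), Measure.pi (fun _ : Fin q => myu) (Fset τ) :=
    measure_iUnion Fset_disjoint fun τ => measurableSet_Fset τ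
  rw [h2, tsum_fintype] at h1
  have h3 : ∀ τ' : Equiv.Perm (Fin q), Measure.pi (fun _ : Fin q => myu) (Fset τ')
      = Measure.pi (fun _ : Fin q => myu) (Fset 1) := fun τ' => Fset_measure_eq_one τ'
  rw [Finset.sum_congr rfl fun τ' _ => h3 τ', Finset.sum_const, Finset.card_univ,
    Fintype.card_perm, Fintype.card_fin] at h1
  have h4 : (q.factorial : ℝ≥0∞) * Measure.pi (fun _ : Fin q => myu) (Fset 1) = 1 := by
    rw [← h1, nsmul_eq_mul]
  have hne : (q.factorial : ℝ≥0∞) ≠ 0 := Nat.cast_ne_zero.mpr q.factorial_ne_zero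
  have hfin : (q.factorial : ℝ≥0∞) ≠ ⊤ := ENNReal.natCast_ne_top _
  have h5 : Measure.pi (fun _ : Fin q => myu) (Fset 1) = (q.factorial : ℝ≥0∞)⁻¹ := by
    calc Measure.pi (fun _ : Fin q => myu) (Fset 1)
        = ((q.factorial : ℝ≥0∞)⁻¹ * (q.factorial : ℝ≥0∞)) *
            Measure.pi (fun _ : Fin q => myu) (Fset 1) := by
          rw [ENNReal.inv_mul_cancel hne hfin, one_mul]
      _ = (q.factorial : ℝ≥0∞)⁻¹ * ((q.factorial : ℝ≥0∞) *
            Measure.pi (fun _ : Fin q => myu) (Fset 1)) := by rw [mul_assoc]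
      _ = (q.factorial : ℝ≥0∞)⁻¹ := by rw [h4, mul_one]
  rw [Fset_measure_eq_one τ, h5]

def Egood (k m q : ℕ) : Set (Fin m → Fin q → ℝ) :=
  {U | ∃ j : Fin q, ∀ j', j' ≠ j → k ≤ Nat.card {a : Fin m // U a j < U a j'}}

lemma measurableSet_Egood (k m q : ℕ) : MeasurableSet (Egood k m q) := by
  have h : Egood k m q = ⋃ j, ⋂ j', ⋂ (_ : j' ≠ j),
      {U : Fin m → Fin q → ℝ | k ≤ Nat.card {a // U a j < U a j'}} := by
    ext; simp [Egood]
  rw [h]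
  refine MeasurableSet.iUnion fun j => MeasurableSet.iInter fun j' =>
    MeasurableSet.iInter fun _ => measurableSet_le_card _ (fun a => measurableSet_lt ?_ ?_) k
  · exact (measurable_pi_apply j).comp (measurable_pi_apply a)
  · exact (measurable_pi_apply j').comp (measurable_pi_apply a)

def Eprofile {m q : ℕ} (σ : Fin m → Equiv.Perm (Fin q)) : Set (Fin m → Fin q → ℝ) :=
  Set.univ.pi fun a => Fset (σ a)

def goodP (k : ℕ) {m q : ℕ} (σ : Fin m → Equiv.Perm (Fin q)) : Prop :=
  ∃ j : Fin q, ∀ j', j' ≠ j → k ≤ Nat.card {a : Fin m // σ a j < σ a j'}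

lemma mem_Eprofile_count {m q : ℕ} {σ : Fin m → Equiv.Perm (Fin q)} {U : Fin m → Fin q → ℝ}
    (hU : U ∈ Eprofile σ) (j j' : Fin q) :
    Nat.card {a : Fin m // U a j < U a j'} = Nat.card {a : Fin m // σ a j < σ a j'} :=
  Nat.card_congr (Equiv.subtypeEquivRight fun a => (hU a (Set.mem_univ a) j j').symm)

lemma Eprofile_good_iff {k m q : ℕ} (σ : Fin m → Equiv.Perm (Fin q)) (U : Fin m → Fin q → ℝ)
    (hU : U ∈ Eprofile σ) : U ∈ Egood k m q ↔ goodP k σ := by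
  unfold Egood goodP
  simp only [Set.mem_setOf_eq]
  refine exists_congr fun j => forall_congr' fun j' => imp_congr_right fun _ => ?_
  rw [mem_Eprofile_count hU j j']

lemma bridge (k m q : ℕ) :
    (Measure.pi fun _ : Fin m => Measure.pi fun _ : Fin q => myu) (Egood k m q)
      = (Nat.card {σ : Fin m → Equiv.Perm (Fin q) // goodP k σ})
          * ((q.factorial : ℝ≥0∞))⁻¹ ^ m := by
  classical
  set P' := (Measure.pi fun _ : Fin m => Measure.pi fun _ : Fin q => myu) with hP'
  have hEpm : ∀ σ : Fin m → Equiv.Perm (Fin q), MeasurableSet (Eprofile σ) :=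
    fun σ => MeasurableSet.univ_pi fun a => measurableSet_Fset (σ a)
  have hEp : ∀ σ : Fin m → Equiv.Perm (Fin q),
      P' (Eprofile σ) = ((q.factorial : ℝ≥0∞))⁻¹ ^ m := by
    intro σ
    rw [hP', Eprofile, Measure.pi_pi]
    rw [Finset.prod_congr rfl fun a _ => Fset_measure (σ a), Finset.prod_const,
      Finset.card_univ, Fintype.card_fin]
  have hcompl : P' ((⋃ σ : Fin m → Equiv.Perm (Fin q), Eprofile σ)ᶜ) = 0 := by
    have hsub : (⋃ σ : Fin m → Equiv.Perm (Fin q), Eprofile σ)ᶜ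
        ⊆ ⋃ a : Fin m, Function.eval a ⁻¹' ((⋃ τ : Equiv.Perm (Fin q), Fset τ)ᶜ) := by
      intro U hU
      by_contra h
      have h' : ∀ a, U a ∈ ⋃ τ : Equiv.Perm (Fin q), Fset τ := by
        intro a
        by_contra ha
        exact h (Set.mem_iUnion.mpr ⟨a, ha⟩)
      choose τ hτ using fun a => Set.mem_iUnion.mp (h' a)
      exact hU (Set.mem_iUnion.mpr ⟨τ, fun a _ => hτ a⟩)
    refine measure_mono_null hsub (measure_iUnion_null fun a => ?_)
    rw [hP', pi_eval_preimage _ a (MeasurableSet.iUnion fun τ => measurableSet_Fset τ).compl]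
    exact compl_iUnion_Fset_null
  have hae : P' (Egood k m q)
      = P' (⋃ σ : Fin m → Equiv.Perm (Fin q), Egood k m q ∩ Eprofile σ) := by
    rw [← Set.inter_iUnion]
    refine measure_congr (MeasureTheory.ae_eq_set.mpr ⟨measure_mono_null ?_ hcompl, ?_⟩)
    · exact fun U hU hUn => hU.2 ⟨hU.1, hUn⟩
    · have h0 : (Egood k m q ∩ ⋃ σ : Fin m → Equiv.Perm (Fin q), Eprofile σ) \ Egood k m q
          = ∅ := Set.diff_eq_empty.mpr Set.inter_subset_left
      rw [h0, measure_empty]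
  have hdisj : Pairwise (Disjoint on
      fun σ : Fin m → Equiv.Perm (Fin q) => Egood k m q ∩ Eprofile σ) := by
    intro σ σ' hne
    have hneq : ∃ a, σ a ≠ σ' a := by
      by_contra h
      push_neg at h
      exact hne (funext h)
    obtain ⟨a, ha⟩ := hneq
    refine Set.disjoint_left.mpr fun {U} hU hU' => ?_
    have h1 : U a ∈ Fset (σ a) := hU.2 a (Set.mem_univ a)
    have h2 : U a ∈ Fset (σ' a) := hU'.2 a (Set.mem_univ a)
    exact ha (perm_eq_of_iff fun j j' => (h1 j j').trans ((h2 j j')).symm)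
  have hsum : P' (⋃ σ : Fin m → Equiv.Perm (Fin q), Egood k m q ∩ Eprofile σ)
      = ∑ σ : Fin m → Equiv.Perm (Fin q), P' (Egood k m q ∩ Eprofile σ) := by
    rw [measure_iUnion hdisj fun σ => (measurableSet_Egood k m q).inter (hEpm σ), tsum_fintype]
  have hterm : ∀ σ : Fin m → Equiv.Perm (Fin q), P' (Egood k m q ∩ Eprofile σ)
      = if goodP k σ then ((q.factorial : ℝ≥0∞))⁻¹ ^ m else 0 := by
    intro σ
    by_cases hg : goodP k σ
    · rw [if_pos hg, ← hEp σ]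
      congr 1
      exact Set.inter_eq_self_of_subset_right fun U hU => (Eprofile_good_iff σ U hU).mpr hg
    · rw [if_neg hg]
      have h0 : Egood k m q ∩ Eprofile σ = ∅ := by
        ext U
        simp only [Set.mem_inter_iff, Set.mem_empty_iff_false, iff_false, not_and]
        intro h1 h2
        exact hg ((Eprofile_good_iff σ U h2).mp h1)
      rw [h0, measure_empty]
  rw [hae, hsum, Finset.sum_congr rfl fun σ _ => hterm σ, ← Finset.sum_filter,
    Finset.sum_const, nsmul_eq_mul]
  have hcard : Nat.card {σ : Fin m → Equiv.Perm (Fin q) // goodP k σ}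
      = (Finset.univ.filter fun σ : Fin m → Equiv.Perm (Fin q) => goodP k σ).card := by
    rw [Nat.card_eq_fintype_card]
    exact Fintype.card_subtype _
  rw [hcard]

def Cset (k m : ℕ) {q : ℕ} (j : Fin q) : Set (Fin q → Fin m → ℝ) :=
  {U | ∀ j', j' ≠ j → k ≤ Nat.card {a : Fin m // U j a < U j' a}}

lemma measurableSet_Cset (k m : ℕ) {q : ℕ} (j : Fin q) : MeasurableSet (Cset k m j) := by
  have h : Cset k m j = ⋂ j', ⋂ (_ : j' ≠ j),
      {U : Fin q → Fin m → ℝ | k ≤ Nat.card {a // U j a < U j' a}} := by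
    ext; simp [Cset]
  rw [h]
  refine MeasurableSet.iInter fun j' => MeasurableSet.iInter fun _ =>
    measurableSet_le_card _ (fun a => measurableSet_lt ?_ ?_) k
  · exact (measurable_pi_apply a).comp (measurable_pi_apply j)
  · exact (measurable_pi_apply a).comp (measurable_pi_apply j')

lemma Cset_measure_eq (k m : ℕ) {q : ℕ} (j1 j2 : Fin q) :
    (Measure.pi fun _ : Fin q => Measure.pi fun _ : Fin m => myu) (Cset k m j1)
      = (Measure.pi fun _ : Fin q => Measure.pi fun _ : Fin m => myu) (Cset k m j2) := by
  set e : Fin q ≃ Fin q := Equiv.swap j1 j2 with hedef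
  have e1 : e j1 = j2 := Equiv.swap_apply_left j1 j2
  have mp := measurePreserving_piCongrLeft
    (fun _ : Fin q => (Measure.pi fun _ : Fin m => myu)) e
  set g := MeasurableEquiv.piCongrLeft (fun _ : Fin q => (Fin m → ℝ)) e with hgdef
  have happ : ∀ (v : Fin q → Fin m → ℝ) (j : Fin q), g v (e j) = v j := fun v j => by
    rw [hgdef, MeasurableEquiv.coe_piCongrLeft]
    exact Equiv.piCongrLeft_apply_apply (fun _ : Fin q => (Fin m → ℝ)) e v j
  have hpre : ⇑g ⁻¹' (Cset k m j2) = Cset k m j1 := by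
    ext v
    simp only [Set.mem_preimage, Cset, Set.mem_setOf_eq]
    constructor
    · intro h j' hj'
      have h2 := h (e j') (fun hc => hj' (e.injective (hc.trans e1.symm)))
      rw [← e1, happ, happ] at h2
      exact h2
    · intro h j' hj'
      obtain ⟨j'', rfl⟩ := e.surjective j'
      have hne : j'' ≠ j1 := fun hc => hj' (by rw [hc, e1])
      have h2 := h j'' hne
      rw [← e1, happ, happ]
      exact h2
  rw [← hpre, mp.measure_preimage (measurableSet_Cset k m j2).nullMeasurableSet]

lemma card_add_card_le {m : ℕ} (p q : Fin m → Prop) (h : ∀ a, ¬(p a ∧ q a)) :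
    Nat.card {a // p a} + Nat.card {a // q a} ≤ m := by
  classical
  rw [Nat.card_eq_fintype_card, Fintype.card_subtype, Nat.card_eq_fintype_card,
    Fintype.card_subtype]
  rw [← Finset.card_union_of_disjoint
    (Finset.disjoint_filter.mpr fun a _ hp hq => h a ⟨hp, hq⟩)]
  calc (Finset.univ.filter p ∪ Finset.univ.filter q).card
      ≤ Finset.univ.card := Finset.card_le_card (Finset.subset_univ _)
    _ = m := Finset.card_fin m

lemma Cset_disjoint (k m : ℕ) {q : ℕ} (hm : m < 2 * k) :
    Pairwise (Disjoint on (Cset k m (q := q))) := by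
  intro j j' hne
  refine Set.disjoint_left.mpr fun {U} hU hU' => ?_
  have h1 := hU j' hne.symm
  have h2 := hU' j hne
  have h3 : Nat.card {a // U j a < U j' a} + Nat.card {a // U j' a < U j a} ≤ m :=
    card_add_card_le (fun a => U j a < U j' a) (fun a => U j' a < U j a)
      (fun a ⟨hx, hy⟩ => absurd hy (not_lt.mpr hx.le))
  omega

def Bset (k m : ℕ) (x : Fin m → ℝ) : Set (Fin m → ℝ) :=
  {X | k ≤ Nat.card {a : Fin m // x a < X a}}

lemma measurableSet_Bset (k m : ℕ) (x : Fin m → ℝ) : MeasurableSet (Bset k m x) :=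
  measurableSet_le_card _ (fun a => measurableSet_lt measurable_const (measurable_pi_apply a)) k

def Sprod (k m q' : ℕ) : Set ((Fin m → ℝ) × (Fin q' → Fin m → ℝ)) :=
  {p | ∀ t, k ≤ Nat.card {a : Fin m // p.1 a < p.2 t a}}

lemma measurableSet_Sprod (k m q' : ℕ) : MeasurableSet (Sprod k m q') := by
  have h : Sprod k m q' = ⋂ t, {p : (Fin m → ℝ) × (Fin q' → Fin m → ℝ) |
      k ≤ Nat.card {a // p.1 a < p.2 t a}} := by
    ext; simp [Sprod]
  rw [h]
  refine MeasurableSet.iInter fun t =>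
    measurableSet_le_card _ (fun a => measurableSet_lt ?_ ?_) k
  · exact (measurable_pi_apply a).comp measurable_fst
  · exact (measurable_pi_apply a).comp ((measurable_pi_apply t).comp measurable_snd)

lemma sliceEq (k m q' : ℕ) (x : Fin m → ℝ) :
    (Measure.pi fun _ : Fin q' => Measure.pi fun _ : Fin m => myu) (Prod.mk x ⁻¹' Sprod k m q')
      = ((Measure.pi fun _ : Fin m => myu) (Bset k m x)) ^ q' := by
  have h : Prod.mk x ⁻¹' Sprod k m q' = Set.univ.pi fun _ : Fin q' => Bset k m x := by
    ext V; simp [Sprod, Bset]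
  rw [h, Measure.pi_pi, Finset.prod_const, Finset.card_univ, Fintype.card_fin]

lemma measurable_slice (k m q' : ℕ) :
    Measurable fun x : Fin m → ℝ => ((Measure.pi fun _ : Fin m => myu) (Bset k m x)) ^ q' := by
  have h := measurable_measure_prodMk_left
    (ν := Measure.pi fun _ : Fin q' => Measure.pi fun _ : Fin m => myu)
    (measurableSet_Sprod k m q')
  simp only [sliceEq] at h
  exact h

lemma fubini (k m q' : ℕ) :
    (Measure.pi fun _ : Fin (q' + 1) => Measure.pi fun _ : Fin m => myu)
        (Cset k m (0 : Fin (q' + 1)))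
      = ∫⁻ x, ((Measure.pi fun _ : Fin m => myu) (Bset k m x)) ^ q'
          ∂(Measure.pi fun _ : Fin m => myu) := by
  have mp := measurePreserving_piFinSuccAbove
    (fun _ : Fin (q' + 1) => (Measure.pi fun _ : Fin m => myu)) 0
  have hpre : ⇑(MeasurableEquiv.piFinSuccAbove (fun _ : Fin (q' + 1) => (Fin m → ℝ)) 0) ⁻¹'
        Sprod k m q' = Cset k m (0 : Fin (q' + 1)) := by
    ext U
    simp only [Set.mem_preimage, Sprod, Cset, Set.mem_setOf_eq,
      MeasurableEquiv.piFinSuccAbove_apply, Fin.removeNth, Fin.succAbove_zero]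
    constructor
    · intro h j' hj'
      obtain ⟨t, rfl⟩ := Fin.exists_succ_eq_of_ne_zero hj'
      exact h t
    · intro h t
      exact h t.succ (Fin.succ_ne_zero t)
  rw [← hpre, mp.measure_preimage (measurableSet_Sprod k m q').nullMeasurableSet,
    Measure.prod_apply (measurableSet_Sprod k m q')]
  exact lintegral_congr (sliceEq k m q')

/-- Impartial culture: each of the `m = 2k-1` voters independently picks a uniformly random
ranking (a permutation of `Fin n`, candidate `j` having rank `σ a j`); candidate `j` is a
Condorcet winner if for every other candidate `j'`, strictly more than `m/2` voters rank `j`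
before `j'`.  The probability `Q_{m,n}` that a Condorcet winner exists equals
`n ∫_{[0,1]^m} P(N(x) ≥ k)^{n-1} dx`, where `N(x)` is the number of coordinates `a` with
`x_a < X_a` for `X` uniform on `[0,1]^m`. -/
theorem condorcet_probability_integral_formula (k n : ℕ) (hk : 1 ≤ k) :
    ((Nat.card {σ : Fin (2 * k - 1) → (Fin n ≃ Fin n) //
        ∃ j : Fin n, ∀ j' : Fin n, j' ≠ j →
          2 * k - 1 < 2 * Nat.card {a : Fin (2 * k - 1) // σ a j < σ a j'}} : ℝ) /
      (Nat.card (Fin (2 * k - 1) → (Fin n ≃ Fin n)) : ℝ))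
    = n * ∫ x in Set.univ.pi (fun _ : Fin (2 * k - 1) => Set.Icc (0 : ℝ) 1),
        ((volume {X : Fin (2 * k - 1) → ℝ |
            X ∈ Set.univ.pi (fun _ : Fin (2 * k - 1) => Set.Icc (0 : ℝ) 1) ∧
            k ≤ Nat.card {a : Fin (2 * k - 1) // x a < X a}}).toReal) ^ (n - 1) := by
  classical
  obtain _ | n' := n
  · have he : IsEmpty {σ : Fin (2 * k - 1) → (Fin 0 ≃ Fin 0) //
        ∃ j : Fin 0, ∀ j' : Fin 0, j' ≠ j →
          2 * k - 1 < 2 * Nat.card {a : Fin (2 * k - 1) // σ a j < σ a j'}} :=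
      ⟨fun ⟨_, hj⟩ => hj.choose.elim0⟩
    rw [Nat.card_of_isEmpty]
    simp
  · set m := 2 * k - 1 with hmdef
    -- rewrite the integrand set
    have hvol : ∀ x : Fin m → ℝ, volume {X : Fin m → ℝ |
        X ∈ Set.univ.pi (fun _ : Fin m => Set.Icc (0:ℝ) 1) ∧
        k ≤ Nat.card {a : Fin m // x a < X a}}
        = (Measure.pi fun _ : Fin m => myu) (Bset k m x) := by
      intro x
      have hseteq : {X : Fin m → ℝ | X ∈ Set.univ.pi (fun _ : Fin m => Set.Icc (0:ℝ) 1) ∧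
          k ≤ Nat.card {a : Fin m // x a < X a}}
          = Bset k m x ∩ Set.univ.pi (fun _ : Fin m => Set.Icc (0:ℝ) 1) := by
        ext X
        simp only [Set.mem_setOf_eq, Set.mem_inter_iff, Bset]
        exact and_comm
      rw [hseteq, ← Measure.restrict_apply (measurableSet_Bset k m x), cube_eq]
    have hfin : ∀ᵐ x ∂(Measure.pi fun _ : Fin m => myu),
        ((Measure.pi fun _ : Fin m => myu) (Bset k m x)) ^ n' < ⊤ := by
      refine Filter.Eventually.of_forall fun x => lt_of_le_of_lt ?_ ENNReal.one_lt_top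
      exact pow_le_one' prob_le_one n'
    have hint : ∫ x, ((Measure.pi fun _ : Fin m => myu) (Bset k m x)).toReal ^ n'
          ∂(Measure.pi fun _ : Fin m => myu)
        = ((Measure.pi fun _ : Fin (n' + 1) => Measure.pi fun _ : Fin m => myu)
            (Cset k m (0 : Fin (n' + 1)))).toReal := by
      rw [fubini k m n', ← integral_toReal (measurable_slice k m n').aemeasurable hfin]
      simp only [ENNReal.toReal_pow]
    have hunion : (Measure.pi fun _ : Fin (n' + 1) => Measure.pi fun _ : Fin m => myu)
          (⋃ j : Fin (n' + 1), Cset k m j)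
        = ((n' + 1 : ℕ) : ℝ≥0∞) *
          (Measure.pi fun _ : Fin (n' + 1) => Measure.pi fun _ : Fin m => myu)
            (Cset k m (0 : Fin (n' + 1))) := by
      rw [measure_iUnion (Cset_disjoint k m (by omega)) (fun j => measurableSet_Cset k m j),
        tsum_fintype, Finset.sum_congr rfl fun j _ => Cset_measure_eq k m j 0,
        Finset.sum_const, Finset.card_univ, Fintype.card_fin, nsmul_eq_mul]
    have hT := transpose_measurePreserving (ι := Fin (n' + 1)) (κ := Fin m) myu
    have hpreT : (fun (U : Fin (n' + 1) → Fin m → ℝ) (a : Fin m) (j : Fin (n' + 1)) => U j a) ⁻¹'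
        (Egood k m (n' + 1)) = ⋃ j : Fin (n' + 1), Cset k m j := by
      ext U
      simp only [Set.mem_preimage, Egood, Set.mem_setOf_eq, Set.mem_iUnion, Cset]
    have hED : (Measure.pi fun _ : Fin m => Measure.pi fun _ : Fin (n' + 1) => myu)
          (Egood k m (n' + 1))
        = (Measure.pi fun _ : Fin (n' + 1) => Measure.pi fun _ : Fin m => myu)
            (⋃ j : Fin (n' + 1), Cset k m j) := by
      rw [← hpreT]
      exact (hT.measure_preimage (measurableSet_Egood k m (n' + 1)).nullMeasurableSet).symm
    have hkey : ((Nat.card {σ : Fin m → Equiv.Perm (Fin (n' + 1)) // goodP k σ}) : ℝ≥0∞)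
          * (((n' + 1).factorial : ℝ≥0∞))⁻¹ ^ m
        = ((n' + 1 : ℕ) : ℝ≥0∞) *
          (Measure.pi fun _ : Fin (n' + 1) => Measure.pi fun _ : Fin m => myu)
            (Cset k m (0 : Fin (n' + 1))) := by
      rw [← bridge k m (n' + 1), hED, hunion]
    have hnum : Nat.card {σ : Fin m → (Fin (n' + 1) ≃ Fin (n' + 1)) //
        ∃ j : Fin (n' + 1), ∀ j' : Fin (n' + 1), j' ≠ j →
          2 * k - 1 < 2 * Nat.card {a : Fin m // σ a j < σ a j'}}
        = Nat.card {σ : Fin m → Equiv.Perm (Fin (n' + 1)) // goodP k σ} := by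
      refine Nat.card_congr (Equiv.subtypeEquivRight fun σ => ?_)
      unfold goodP
      refine exists_congr fun j => forall_congr' fun j' => imp_congr_right fun _ => ?_
      constructor
      · intro h; omega
      · intro h; omega
    have hden : Nat.card (Fin m → (Fin (n' + 1) ≃ Fin (n' + 1))) = (n' + 1).factorial ^ m := by
      rw [Nat.card_eq_fintype_card, Fintype.card_fun, Fintype.card_equiv (Equiv.refl _),
        Fintype.card_fin, Fintype.card_fin]
    rw [hnum, hden]
    have hgoalint : ∫ x in Set.univ.pi (fun _ : Fin m => Set.Icc (0 : ℝ) 1),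
        ((volume {X : Fin m → ℝ |
            X ∈ Set.univ.pi (fun _ : Fin m => Set.Icc (0 : ℝ) 1) ∧
            k ≤ Nat.card {a : Fin m // x a < X a}}).toReal) ^ (n' + 1 - 1)
        = ((Measure.pi fun _ : Fin (n' + 1) => Measure.pi fun _ : Fin m => myu)
            (Cset k m (0 : Fin (n' + 1)))).toReal := by
      rw [← hint]
      rw [show (Measure.restrict volume (Set.univ.pi fun _ : Fin m => Set.Icc (0 : ℝ) 1))
          = Measure.pi fun _ : Fin m => myu from cube_eq (Fin m)]
      refine integral_congr_ae (Filter.Eventually.of_forall fun x => ?_)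
      simp only [hvol, Nat.add_sub_cancel]
    rw [hgoalint]
    have htr : ((n' + 1 : ℕ) : ℝ) *
        ((Measure.pi fun _ : Fin (n' + 1) => Measure.pi fun _ : Fin m => myu)
          (Cset k m (0 : Fin (n' + 1)))).toReal
        = (((n' + 1 : ℕ) : ℝ≥0∞) *
            (Measure.pi fun _ : Fin (n' + 1) => Measure.pi fun _ : Fin m => myu)
              (Cset k m (0 : Fin (n' + 1)))).toReal := by
      rw [ENNReal.toReal_mul, ENNReal.toReal_natCast]
    rw [htr, ← hkey, ENNReal.toReal_mul, ENNReal.toReal_pow, ENNReal.toReal_inv,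
      ENNReal.toReal_natCast, ENNReal.toReal_natCast, div_eq_mul_inv]
    push_cast
    ring
end
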